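/- There exist two matrices A, B in SO(3) (the group of real 3×3 orthogonal matrices with determinant 1) such that the subgroup they generate is free of rank 2 (i.e., the homomorphism from the free group on two generators sending the generators to A and B is injective) and is dense in SO(3) (its topological closure is all of SO(3)). (This existence claim underlies the construction of the non-amenable suspension foliation in Proposition 3.5.) -/

import Mathlib

set_option maxRecDepth 4000

open Matrix

namespace SO3Free

/-- Sign of a boolean as an integer. -/
def sgn (s : Bool) : ℤ := if s then 1 else -1

/-- Integer version of the action of a letter (5 times the rotation). -/
def step (l : Bool × Bool) (v : ℤ × ℤ × ℤ) : ℤ × ℤ × ℤ :=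
  if l.1 then (3 * v.1 - 4 * sgn l.2 * v.2.1, 4 * sgn l.2 * v.1 + 3 * v.2.1, 5 * v.2.2)
  else (5 * v.1, 3 * v.2.1 - 4 * sgn l.2 * v.2.2, 4 * sgn l.2 * v.2.1 + 3 * v.2.2)

def sgnm (s : Bool) : ZMod 5 := if s then 1 else -1

def stepm (l : Bool × Bool) (v : ZMod 5 × ZMod 5 × ZMod 5) : ZMod 5 × ZMod 5 × ZMod 5 :=
  if l.1 then (3 * v.1 - 4 * sgnm l.2 * v.2.1, 4 * sgnm l.2 * v.1 + 3 * v.2.1, 5 * v.2.2)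
  else (5 * v.1, 3 * v.2.1 - 4 * sgnm l.2 * v.2.2, 4 * sgnm l.2 * v.2.1 + 3 * v.2.2)

/-- Reduction mod 5, componentwise. -/
def pm (v : ℤ × ℤ × ℤ) : ZMod 5 × ZMod 5 × ZMod 5 := ((v.1 : ZMod 5), (v.2.1 : ZMod 5), (v.2.2 : ZMod 5))

theorem pm_step (l : Bool × Bool) (v : ℤ × ℤ × ℤ) : pm (step l v) = stepm l (pm v) := by
  have h : ((sgn l.2 : ℤ) : ZMod 5) = sgnm l.2 := by cases l.2 <;> simp [sgn, sgnm]
  cases hl : l.1 <;> simp [step, stepm, pm, hl, h] <;> push_cast [← h] <;> constructor <;> ring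

/-- The invariant on states mod 5; first component of the letter tells which
generator was applied last. -/
def Inv (l : Bool × Bool) (v : ZMod 5 × ZMod 5 × ZMod 5) : Prop :=
  v.2.1 ≠ 0 ∧ if l.1 then (v.2.2 = 0 ∧ v.2.1 = 3 * sgnm l.2 * v.1)
    else (v.1 = 0 ∧ v.2.1 = 2 * sgnm l.2 * v.2.2)

instance (l : Bool × Bool) (v) : Decidable (Inv l v) := by unfold Inv; infer_instance

def basev (l : Bool × Bool) : ℤ × ℤ × ℤ := if l.1 then (1, 0, 0) else (0, 0, 1)

theorem inv_base (l : Bool × Bool) : Inv l (stepm l (pm (basev l))) := by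
  rcases l with ⟨g, s⟩; cases g <;> cases s <;> decide

theorem inv_step (l x : Bool × Bool) (v : ZMod 5 × ZMod 5 × ZMod 5)
    (hv : Inv x v) (hc : ¬(x.1 = l.1 ∧ x.2 = !l.2)) : Inv l (stepm l v) := by
  rcases l with ⟨g, s⟩; rcases x with ⟨g', s'⟩
  revert hv hc; revert v
  cases g <;> cases s <;> cases g' <;> cases s' <;> decide


theorem not_chain'_decomp {α : Type*} {R : α → α → Prop} :
    ∀ L : List α, ¬ List.Chain' R L → ∃ L₁ a b L₂, L = L₁ ++ a :: b :: L₂ ∧ ¬ R a b := by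
  intro L
  induction L with
  | nil => simp [List.Chain']
  | cons a t ih =>
    cases t with
    | nil => simp [List.Chain']
    | cons b t' =>
      intro h
      rw [List.Chain', List.isChain_cons_cons] at h
      by_cases hab : R a b
      · have h2 : ¬ List.Chain' R (b :: t') := fun hc => h ⟨hab, hc⟩
        obtain ⟨L₁, x, y, L₂, heq, hxy⟩ := ih h2
        exact ⟨a :: L₁, x, y, L₂, by simp [heq], hxy⟩
      · exact ⟨[], a, b, t', rfl, hab⟩

/-- The compatibility relation between adjacent letters in a reduced word. -/
def Compat (p q : Bool × Bool) : Prop := ¬(q.1 = p.1 ∧ q.2 = !p.2)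

theorem chain'_of_reduced (L : List (Bool × Bool)) (h : FreeGroup.reduce L = L) :
    List.Chain' Compat L := by
  by_contra hc
  obtain ⟨L₁, a, b, L₂, heq, hab⟩ := not_chain'_decomp L hc
  rw [Compat, not_not] at hab
  have hb : b = (a.1, !a.2) := by
    rcases hab with ⟨h1, h2⟩; ext
    · exact h1
    · simp [h2]
  refine FreeGroup.reduce.not (L₁ := L) (L₂ := L₁) (L₃ := L₂) (x := a.1) (b := a.2) ?_
  rw [h, heq, hb]

theorem inv_fold : ∀ (L : List (Bool × Bool)) (h : L ≠ []),
    List.Chain' Compat L →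
    Inv (L.head h) (L.foldr stepm (pm (basev (L.getLast h)))) := by
  intro L
  induction L with
  | nil => intro h; exact absurd rfl h
  | cons l t ih =>
    intro _ hch
    cases t with
    | nil => exact inv_base l
    | cons x rest =>
      rw [List.Chain', List.isChain_cons_cons] at hch
      have hne : x :: rest ≠ [] := by simp
      have hgl : (l :: x :: rest).getLast (by simp) = (x :: rest).getLast hne :=
        List.getLast_cons hne
      have hiv := ih hne hch.2
      rw [List.head_cons, List.foldr_cons, hgl]
      exact inv_step l x _ hiv hch.1

theorem pm_fold (L : List (Bool × Bool)) (v : ℤ × ℤ × ℤ) :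
    pm (L.foldr step v) = L.foldr stepm (pm v) := by
  induction L with
  | nil => rfl
  | cons l t ih => rw [List.foldr_cons, List.foldr_cons, pm_step, ih]

noncomputable section

abbrev Mat := Matrix (Fin 3) (Fin 3) ℝ

def Rz (t : ℝ) : Mat := !![Real.cos t, -Real.sin t, 0; Real.sin t, Real.cos t, 0; 0, 0, 1]
def Rx (t : ℝ) : Mat := !![1, 0, 0; 0, Real.cos t, -Real.sin t; 0, Real.sin t, Real.cos t]

theorem Rz_mul (s t : ℝ) : Rz s * Rz t = Rz (s + t) := by
  ext i j
  fin_cases i <;> fin_cases j <;>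
    simp [Rz, Matrix.mul_apply, Fin.sum_univ_three, Real.cos_add, Real.sin_add] <;> ring

theorem Rx_mul (s t : ℝ) : Rx s * Rx t = Rx (s + t) := by
  ext i j
  fin_cases i <;> fin_cases j <;>
    simp [Rx, Matrix.mul_apply, Fin.sum_univ_three, Real.cos_add, Real.sin_add,
      Matrix.vecHead, Matrix.vecTail, Function.comp] <;> ring

theorem Rz_zero : Rz 0 = 1 := by
  ext i j; fin_cases i <;> fin_cases j <;> norm_num [Rz, Matrix.one_apply, Fin.ext_iff]

theorem Rx_zero : Rx 0 = 1 := by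
  ext i j; fin_cases i <;> fin_cases j <;> norm_num [Rx, Matrix.one_apply, Fin.ext_iff]

def θ : ℝ := Real.arccos (3/5)

theorem cos_theta : Real.cos θ = 3/5 := Real.cos_arccos (by norm_num) (by norm_num)

theorem sin_theta : Real.sin θ = 4/5 := by
  rw [θ, Real.sin_arccos, show (1:ℝ) - (3/5)^2 = (4/5)^2 by norm_num,
    Real.sqrt_sq (by norm_num)]

theorem Rz_theta : Rz θ = !![3/5, -4/5, 0; 4/5, 3/5, 0; 0, 0, 1] := by
  rw [Rz, cos_theta, sin_theta]; norm_num

theorem Rz_neg_theta : Rz (-θ) = !![3/5, 4/5, 0; -4/5, 3/5, 0; 0, 0, 1] := by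
  rw [Rz, Real.cos_neg, Real.sin_neg, cos_theta, sin_theta]; norm_num

theorem Rx_theta : Rx θ = !![1, 0, 0; 0, 3/5, -4/5; 0, 4/5, 3/5] := by
  rw [Rx, cos_theta, sin_theta]; norm_num

theorem Rx_neg_theta : Rx (-θ) = !![1, 0, 0; 0, 3/5, 4/5; 0, -4/5, 3/5] := by
  rw [Rx, Real.cos_neg, Real.sin_neg, cos_theta, sin_theta]; norm_num

def Au : Matˣ :=
  ⟨Rz θ, Rz (-θ), by rw [Rz_mul, add_neg_cancel, Rz_zero], by rw [Rz_mul, neg_add_cancel, Rz_zero]⟩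

def Bu : Matˣ :=
  ⟨Rx θ, Rx (-θ), by rw [Rx_mul, add_neg_cancel, Rx_zero], by rw [Rx_mul, neg_add_cancel, Rx_zero]⟩

/-- The letter-to-unit map, matching `FreeGroup.lift.mk`. -/
def g (x : Bool × Bool) : Matˣ :=
  cond x.2 (if x.1 then Au else Bu) (if x.1 then Au else Bu)⁻¹

theorem g_val : ∀ x : Bool × Bool, (g x : Mat) =
    if x.1 then (if x.2 then Rz θ else Rz (-θ)) else (if x.2 then Rx θ else Rx (-θ)) := by
  rintro ⟨gb, s⟩
  cases gb <;> cases s <;> simp [g, Au, Bu]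

/-- Cast an integer triple to a real vector. -/
def cv (v : ℤ × ℤ × ℤ) : Fin 3 → ℝ := ![(v.1 : ℝ), (v.2.1 : ℝ), (v.2.2 : ℝ)]

theorem mulVec_step (l : Bool × Bool) (v : ℤ × ℤ × ℤ) :
    (5:ℝ) • ((g l : Mat) *ᵥ cv v) = cv (step l v) := by
  rcases l with ⟨gb, s⟩
  funext i
  cases gb <;> cases s <;> fin_cases i <;>
    simp [g_val, Rz_theta, Rz_neg_theta, Rx_theta, Rx_neg_theta, cv, step, sgn,
      Matrix.mulVec, dotProduct, Fin.sum_univ_three] <;>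
    push_cast <;> ring

theorem prod_mulVec (L : List (Bool × Bool)) (v : ℤ × ℤ × ℤ) :
    (5:ℝ) ^ L.length • (((L.map g).prod : Mat) *ᵥ cv v) = cv (L.foldr step v) := by
  induction L with
  | nil => simp [cv]
  | cons l t ih =>
    rw [List.map_cons, List.prod_cons, Units.val_mul, ← Matrix.mulVec_mulVec,
      List.length_cons, pow_succ, mul_comm ((5:ℝ) ^ t.length) 5, mul_smul,
      ← Matrix.mulVec_smul, ih, List.foldr_cons, ← mulVec_step l]

theorem lift_injective :
    Function.Injective
      (FreeGroup.lift (fun b : Bool => if b then Au else Bu) : FreeGroup Bool →* Matˣ) := by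
  rw [injective_iff_map_eq_one]
  intro w hw
  by_contra hne
  have hL : w.toWord ≠ [] := fun h => hne (FreeGroup.toWord_eq_nil_iff.mp h)
  set L := w.toWord with hLdef
  have hred : FreeGroup.reduce L = L := FreeGroup.reduce_toWord w
  have hprod : (L.map g).prod = 1 := by
    rw [← FreeGroup.mk_toWord (x := w), FreeGroup.lift_mk] at hw
    exact hw
  have hfold := prod_mulVec L (basev (L.getLast hL))
  rw [hprod] at hfold
  simp only [Units.val_one, Matrix.one_mulVec] at hfold
  have hb := congrFun hfold 1
  have hbase1 : cv (basev (L.getLast hL)) 1 = 0 := by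
    by_cases h : (L.getLast hL).1 <;> simp [basev, cv, h]
  rw [Pi.smul_apply, hbase1, smul_zero] at hb
  have hz : (L.foldr step (basev (L.getLast hL))).2.1 = 0 := by
    have h3 : ((L.foldr step (basev (L.getLast hL))).2.1 : ℝ) = 0 := by
      simpa [cv] using hb.symm
    exact_mod_cast h3
  have hinv := inv_fold L hL (chain'_of_reduced L hred)
  have hnz := hinv.1
  rw [← pm_fold] at hnz
  exact hnz (by simp [pm, hz])

section Density

theorem Rz_transpose (t : ℝ) : (Rz t)ᵀ = Rz (-t) := by
  ext i j; fin_cases i <;> fin_cases j <;> norm_num [Rz, Matrix.transpose_apply]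

theorem Rx_transpose (t : ℝ) : (Rx t)ᵀ = Rx (-t) := by
  ext i j; fin_cases i <;> fin_cases j <;> norm_num [Rx, Matrix.transpose_apply]

theorem Rz_orth (t : ℝ) : (Rz t)ᵀ * Rz t = 1 := by
  rw [Rz_transpose, Rz_mul, neg_add_cancel, Rz_zero]

theorem Rx_orth (t : ℝ) : (Rx t)ᵀ * Rx t = 1 := by
  rw [Rx_transpose, Rx_mul, neg_add_cancel, Rx_zero]

theorem Rz_det (t : ℝ) : (Rz t).det = 1 := by
  rw [Rz, Matrix.det_fin_three]
  simp [Matrix.vecHead, Matrix.vecTail]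
  nlinarith [Real.sin_sq_add_cos_sq t]

theorem Rx_det (t : ℝ) : (Rx t).det = 1 := by
  rw [Rx, Matrix.det_fin_three]
  simp [Matrix.vecHead, Matrix.vecTail]
  nlinarith [Real.sin_sq_add_cos_sq t]

def Rzu (t : ℝ) : Matˣ :=
  ⟨Rz t, Rz (-t), by rw [Rz_mul, add_neg_cancel, Rz_zero], by rw [Rz_mul, neg_add_cancel, Rz_zero]⟩

def Rxu (t : ℝ) : Matˣ :=
  ⟨Rx t, Rx (-t), by rw [Rx_mul, add_neg_cancel, Rx_zero], by rw [Rx_mul, neg_add_cancel, Rx_zero]⟩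

def φz : Multiplicative ℝ →* Matˣ :=
  MonoidHom.mk' (fun t => Rzu t.toAdd)
    (fun a b => Units.ext (by simp only [toAdd_mul]; exact (Rz_mul _ _).symm))

def φx : Multiplicative ℝ →* Matˣ :=
  MonoidHom.mk' (fun t => Rxu t.toAdd)
    (fun a b => Units.ext (by simp only [toAdd_mul]; exact (Rx_mul _ _).symm))

theorem Rzu_zpow (t : ℝ) (q : ℤ) : Rzu ((q : ℝ) * t) = Rzu t ^ q := by
  have h := map_zpow φz (Multiplicative.ofAdd t) q
  have h2 : (Multiplicative.ofAdd t) ^ q = Multiplicative.ofAdd ((q : ℝ) * t) := by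
    rw [← ofAdd_zsmul]; norm_num
  rw [h2] at h
  exact h

theorem Rxu_zpow (t : ℝ) (q : ℤ) : Rxu ((q : ℝ) * t) = Rxu t ^ q := by
  have h := map_zpow φx (Multiplicative.ofAdd t) q
  have h2 : (Multiplicative.ofAdd t) ^ q = Multiplicative.ofAdd ((q : ℝ) * t) := by
    rw [← ofAdd_zsmul]; norm_num
  rw [h2] at h
  exact h

/-- The special orthogonal subgroup of the units of the matrix ring. -/
def SOu : Subgroup Matˣ where
  carrier := {M | (M : Mat)ᵀ * (M : Mat) = 1 ∧ (M : Mat).det = 1}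
  one_mem' := by simp
  mul_mem' := by
    rintro a b ⟨ha1, ha2⟩ ⟨hb1, hb2⟩
    refine ⟨?_, ?_⟩
    · have h : (a : Mat)ᵀ * ((a : Mat) * (b : Mat)) = (b : Mat) := by
        rw [← Matrix.mul_assoc, ha1, Matrix.one_mul]
      rw [Units.val_mul, Matrix.transpose_mul, Matrix.mul_assoc, h, hb1]
    · rw [Units.val_mul, Matrix.det_mul, ha2, hb2, mul_one]
  inv_mem' := by
    rintro a ⟨h1, h2⟩
    have hcomm : (a : Mat) * (a : Mat)ᵀ = 1 := mul_eq_one_comm.mp h1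
    have hv : ((a⁻¹ : Matˣ) : Mat) = (a : Mat)ᵀ := Units.inv_eq_of_mul_eq_one_right hcomm
    refine ⟨?_, ?_⟩
    · rw [hv, Matrix.transpose_transpose]; exact hcomm
    · rw [hv, Matrix.det_transpose]; exact h2

theorem Au_val : (Au : Mat) = Rz θ := rfl
theorem Bu_val : (Bu : Mat) = Rx θ := rfl

theorem Au_mem_SOu : Au ∈ SOu := ⟨by rw [Au_val]; exact Rz_orth θ, by rw [Au_val]; exact Rz_det θ⟩
theorem Bu_mem_SOu : Bu ∈ SOu := ⟨by rw [Bu_val]; exact Rx_orth θ, by rw [Bu_val]; exact Rx_det θ⟩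

def Gp : Subgroup Matˣ := Subgroup.closure {Au, Bu}

theorem Gp_le_SOu : Gp ≤ SOu := by
  rw [Gp, Subgroup.closure_le]
  rintro x (rfl | rfl)
  · exact Au_mem_SOu
  · exact Bu_mem_SOu

def S : Submonoid Mat := Submonoid.map (Units.coeHom Mat) Gp.toSubmonoid

def C : Submonoid Mat := S.topologicalClosure

theorem coe_C : (C : Set Mat) =
    closure ((fun M : Matˣ => (M : Mat)) '' (Gp : Set Matˣ)) := by
  rw [C, Submonoid.topologicalClosure]
  rfl

theorem transpose_mem_C {M : Mat} (h : M ∈ C) : Mᵀ ∈ C := by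
  have hS : ∀ N ∈ (S : Set Mat), Nᵀ ∈ (S : Set Mat) := by
    rintro N ⟨u, hu, rfl⟩
    have hu' : u ∈ Gp := hu
    have hval : ((u⁻¹ : Matˣ) : Mat) = (Units.coeHom Mat u)ᵀ :=
      Units.inv_eq_of_mul_eq_one_right (mul_eq_one_comm.mp (Gp_le_SOu hu').1)
    exact ⟨u⁻¹, Gp.inv_mem hu', hval⟩
  have hc : Continuous (fun M : Mat => Mᵀ) := continuous_id.matrix_transpose
  have himg := image_closure_subset_closure_image (s := (S : Set Mat)) hc
  have hsub : (fun M : Mat => Mᵀ) '' (S : Set Mat) ⊆ (S : Set Mat) := by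
    rintro _ ⟨N, hN, rfl⟩; exact hS N hN
  have h2 : Mᵀ ∈ closure ((fun M : Mat => Mᵀ) '' (S : Set Mat)) :=
    himg ⟨M, h, rfl⟩
  exact closure_mono hsub h2

theorem continuous_Rz : Continuous Rz := by
  apply continuous_matrix
  intro i j
  fin_cases i <;> fin_cases j <;> simp [Rz] <;> fun_prop

theorem continuous_Rx : Continuous Rx := by
  apply continuous_matrix
  intro i j
  fin_cases i <;> fin_cases j <;> simp [Rx] <;> fun_prop

theorem isClosed_C : IsClosed (C : Set Mat) := S.isClosed_topologicalClosure

/-- Infinite order of `Au` in the units group. -/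
theorem Au_zpow_ne_one (q : ℤ) (hq : q ≠ 0) : Au ^ q ≠ 1 := by
  intro h
  have hfree : (FreeGroup.of true : FreeGroup Bool) ^ q = 1 := by
    apply lift_injective
    rw [map_zpow, _root_.map_one, FreeGroup.lift_apply_of]
    simpa using h
  set F := FreeGroup.lift (fun _ : Bool => Multiplicative.ofAdd (1 : ℤ)) with hF
  have h2 : F (FreeGroup.of true) ^ q = 1 := by
    rw [← map_zpow F, hfree, _root_.map_one F]
  rw [hF, FreeGroup.lift_apply_of, ← ofAdd_zsmul] at h2
  have h3 : q • (1 : ℤ) = 0 := by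
    have := congrArg Multiplicative.toAdd h2
    simpa using this
  simp at h3
  exact hq h3

theorem Bu_zpow_ne_one (q : ℤ) (hq : q ≠ 0) : Bu ^ q ≠ 1 := by
  intro h
  have hfree : (FreeGroup.of false : FreeGroup Bool) ^ q = 1 := by
    apply lift_injective
    rw [map_zpow, _root_.map_one, FreeGroup.lift_apply_of]
    simpa using h
  set F := FreeGroup.lift (fun b : Bool => Multiplicative.ofAdd (if b then (0:ℤ) else 1)) with hF
  have h2 : F (FreeGroup.of false) ^ q = 1 := by
    rw [← map_zpow F, hfree, _root_.map_one F]
  rw [hF, FreeGroup.lift_apply_of] at h2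
  simp only [Bool.false_eq_true, if_false] at h2
  rw [← ofAdd_zsmul] at h2
  have h3 : q • (1 : ℤ) = 0 := by
    have := congrArg Multiplicative.toAdd h2
    simpa using this
  simp at h3
  exact hq h3

theorem Rz_two_pi : Rz (2 * Real.pi) = 1 := by
  ext i j
  fin_cases i <;> fin_cases j <;>
    norm_num [Rz, Real.cos_two_pi, Real.sin_two_pi, Matrix.one_apply, Fin.ext_iff]

theorem Rx_two_pi : Rx (2 * Real.pi) = 1 := by
  ext i j
  fin_cases i <;> fin_cases j <;>
    norm_num [Rx, Real.cos_two_pi, Real.sin_two_pi, Matrix.one_apply, Fin.ext_iff]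

/-- The set of angles whose `z`-rotation lies in the closure is an additive subgroup. -/
def TTz : AddSubgroup ℝ where
  carrier := {t | Rz t ∈ C}
  zero_mem' := by show Rz 0 ∈ C; rw [Rz_zero]; exact C.one_mem
  add_mem' := by
    intro a b ha hb
    show Rz (a + b) ∈ C
    rw [← Rz_mul]; exact C.mul_mem ha hb
  neg_mem' := by
    intro a ha
    show Rz (-a) ∈ C
    rw [← Rz_transpose]; exact transpose_mem_C ha

def TTx : AddSubgroup ℝ where
  carrier := {t | Rx t ∈ C}
  zero_mem' := by show Rx 0 ∈ C; rw [Rx_zero]; exact C.one_mem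
  add_mem' := by
    intro a b ha hb
    show Rx (a + b) ∈ C
    rw [← Rx_mul]; exact C.mul_mem ha hb
  neg_mem' := by
    intro a ha
    show Rx (-a) ∈ C
    rw [← Rx_transpose]; exact transpose_mem_C ha

theorem Au_mem_C : (Au : Mat) ∈ C :=
  S.le_topologicalClosure ⟨Au, Subgroup.subset_closure (by simp), rfl⟩

theorem Bu_mem_C : (Bu : Mat) ∈ C :=
  S.le_topologicalClosure ⟨Bu, Subgroup.subset_closure (by simp), rfl⟩

theorem Rz_mem_C (t : ℝ) : Rz t ∈ C := by
  have hθ : θ ∈ TTz := by show Rz θ ∈ C; rw [← Au_val]; exact Au_mem_C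
  have h2π : 2 * Real.pi ∈ TTz := by show Rz (2 * Real.pi) ∈ C; rw [Rz_two_pi]; exact C.one_mem
  have hclosed : IsClosed (TTz : Set ℝ) := isClosed_C.preimage continuous_Rz
  rcases TTz.dense_or_cyclic with hd | ⟨a, ha⟩
  · have huniv : (TTz : Set ℝ) = Set.univ := by
      rw [← hclosed.closure_eq]; exact hd.closure_eq
    show t ∈ (TTz : Set ℝ)
    rw [huniv]; trivial
  · exfalso
    rw [ha] at hθ h2π
    obtain ⟨m, hm⟩ := AddSubgroup.mem_closure_singleton.mp hθ
    obtain ⟨q, hq⟩ := AddSubgroup.mem_closure_singleton.mp h2π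
    have hq0 : q ≠ 0 := by
      rintro rfl
      simp at hq
    have h1 : (q : ℝ) * θ = (m : ℝ) * (2 * Real.pi) := by
      rw [zsmul_eq_mul] at hm hq
      rw [← hm, ← hq]; ring
    have h2 : Rzu ((q : ℝ) * θ) = Rzu ((m : ℝ) * (2 * Real.pi)) := by rw [h1]
    rw [Rzu_zpow, Rzu_zpow] at h2
    have h3 : Rzu (2 * Real.pi) = 1 := Units.ext (by show Rz (2 * Real.pi) = 1; exact Rz_two_pi)
    have h4 : Au = Rzu θ := Units.ext rfl
    refine Au_zpow_ne_one q hq0 ?_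
    rw [h4, h2, h3, _root_.one_zpow]

theorem Rx_mem_C (t : ℝ) : Rx t ∈ C := by
  have hθ : θ ∈ TTx := by show Rx θ ∈ C; rw [← Bu_val]; exact Bu_mem_C
  have h2π : 2 * Real.pi ∈ TTx := by show Rx (2 * Real.pi) ∈ C; rw [Rx_two_pi]; exact C.one_mem
  have hclosed : IsClosed (TTx : Set ℝ) := isClosed_C.preimage continuous_Rx
  rcases TTx.dense_or_cyclic with hd | ⟨a, ha⟩
  · have huniv : (TTx : Set ℝ) = Set.univ := by
      rw [← hclosed.closure_eq]; exact hd.closure_eq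
    show t ∈ (TTx : Set ℝ)
    rw [huniv]; trivial
  · exfalso
    rw [ha] at hθ h2π
    obtain ⟨m, hm⟩ := AddSubgroup.mem_closure_singleton.mp hθ
    obtain ⟨q, hq⟩ := AddSubgroup.mem_closure_singleton.mp h2π
    have hq0 : q ≠ 0 := by
      rintro rfl
      simp at hq
    have h1 : (q : ℝ) * θ = (m : ℝ) * (2 * Real.pi) := by
      rw [zsmul_eq_mul] at hm hq
      rw [← hm, ← hq]; ring
    have h2 : Rxu ((q : ℝ) * θ) = Rxu ((m : ℝ) * (2 * Real.pi)) := by rw [h1]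
    rw [Rxu_zpow, Rxu_zpow] at h2
    have h3 : Rxu (2 * Real.pi) = 1 := Units.ext (by show Rx (2 * Real.pi) = 1; exact Rx_two_pi)
    have h4 : Bu = Rxu θ := Units.ext rfl
    refine Bu_zpow_ne_one q hq0 ?_
    rw [h4, h2, h3, _root_.one_zpow]

end Density

section Euler

theorem exists_angle (p r : ℝ) (h : p^2 + r^2 = 1) : ∃ γ, Real.cos γ = p ∧ Real.sin γ = r := by
  have hz : (⟨p, r⟩ : ℂ) ≠ 0 := by
    intro h0
    rw [Complex.ext_iff] at h0
    simp only [Complex.zero_re, Complex.zero_im] at h0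
    rw [h0.1, h0.2] at h; norm_num at h
  have habs : ‖(⟨p, r⟩ : ℂ)‖ = 1 := by
    rw [Complex.norm_def, Complex.normSq_mk, show p * p + r * r = 1 by nlinarith]
    exact Real.sqrt_one
  refine ⟨Complex.arg ⟨p, r⟩, ?_, ?_⟩
  · rw [Complex.cos_arg hz, habs]; simp
  · rw [Complex.sin_arg, habs]; simp

theorem orth_mul {P Q : Mat} (hP : Pᵀ * P = 1) (hQ : Qᵀ * Q = 1) : (P * Q)ᵀ * (P * Q) = 1 := by
  have h : Pᵀ * (P * Q) = Q := by rw [← Matrix.mul_assoc, hP, Matrix.one_mul]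
  rw [Matrix.transpose_mul, Matrix.mul_assoc, h, hQ]

theorem eq_Rz_of_fixed (N : Mat) (h1 : Nᵀ * N = 1) (h2 : N.det = 1)
    (hc0 : N 0 2 = 0) (hc1 : N 1 2 = 0) (hc2 : N 2 2 = 1) : ∃ γ, N = Rz γ := by
  have hcomm : N * Nᵀ = 1 := mul_eq_one_comm.mp h1
  have e22 : N 2 0 * N 2 0 + N 2 1 * N 2 1 + N 2 2 * N 2 2 = 1 := by
    have h := congrFun (congrFun hcomm 2) 2
    simpa [Matrix.mul_apply, Fin.sum_univ_three, Matrix.one_apply,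
      Matrix.transpose_apply] using h
  have h20 : N 2 0 = 0 := by nlinarith [sq_nonneg (N 2 0), sq_nonneg (N 2 1)]
  have h21 : N 2 1 = 0 := by nlinarith [sq_nonneg (N 2 0), sq_nonneg (N 2 1)]
  have a00 : N 0 0 * N 0 0 + N 1 0 * N 1 0 + N 2 0 * N 2 0 = 1 := by
    have h := congrFun (congrFun h1 0) 0
    simpa [Matrix.mul_apply, Fin.sum_univ_three, Matrix.one_apply,
      Matrix.transpose_apply] using h
  have a01 : N 0 0 * N 0 1 + N 1 0 * N 1 1 + N 2 0 * N 2 1 = 0 := by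
    have h := congrFun (congrFun h1 0) 1
    simpa [Matrix.mul_apply, Fin.sum_univ_three, Matrix.one_apply,
      Matrix.transpose_apply] using h
  rw [Matrix.det_fin_three] at h2
  rw [hc0, hc1, hc2, h20, h21] at h2
  -- now h2 : N 0 0 * N 1 1 * 1 - ... = 1 with zeros
  have a00' : N 0 0 ^ 2 + N 1 0 ^ 2 = 1 := by rw [h20] at a00; nlinarith [a00]
  have a01' : N 0 0 * N 0 1 + N 1 0 * N 1 1 = 0 := by rw [h20] at a01; linarith [a01]
  have hdet' : N 0 0 * N 1 1 - N 0 1 * N 1 0 = 1 := by linarith [h2]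
  have hq : N 0 1 = -(N 1 0) := by
    linear_combination N 0 0 * a01' - N 1 0 * hdet' - N 0 1 * a00'
  have hs : N 1 1 = N 0 0 := by
    linear_combination N 0 0 * hdet' + N 1 0 * a01' - N 1 1 * a00'
  obtain ⟨γ, hγc, hγs⟩ := exists_angle (N 0 0) (N 1 0) a00'
  refine ⟨γ, ?_⟩
  ext i j
  fin_cases i <;> fin_cases j <;>
    norm_num [Rz, hγc, hγs] <;>
    first
      | exact hc0 | exact hc1 | exact hc2 | exact h20 | exact h21
      | linarith [hq, hs, hγc, hγs]

theorem Rz_mul_e02 (t : ℝ) (M : Mat) :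
    (Rz t * M) 0 2 = Real.cos t * M 0 2 - Real.sin t * M 1 2 := by
  simp [Rz, Matrix.mul_apply, Fin.sum_univ_three]; ring

theorem Rz_mul_e12 (t : ℝ) (M : Mat) :
    (Rz t * M) 1 2 = Real.sin t * M 0 2 + Real.cos t * M 1 2 := by
  simp [Rz, Matrix.mul_apply, Fin.sum_univ_three]

theorem Rz_mul_e22 (t : ℝ) (M : Mat) : (Rz t * M) 2 2 = M 2 2 := by
  simp [Rz, Matrix.mul_apply, Fin.sum_univ_three]

theorem Rx_mul_e02 (t : ℝ) (M : Mat) : (Rx t * M) 0 2 = M 0 2 := by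
  simp [Rx, Matrix.mul_apply, Fin.sum_univ_three]

theorem Rx_mul_e12 (t : ℝ) (M : Mat) :
    (Rx t * M) 1 2 = Real.cos t * M 1 2 - Real.sin t * M 2 2 := by
  simp [Rx, Matrix.mul_apply, Fin.sum_univ_three]; ring

theorem Rx_mul_e22 (t : ℝ) (M : Mat) :
    (Rx t * M) 2 2 = Real.sin t * M 1 2 + Real.cos t * M 2 2 := by
  simp [Rx, Matrix.mul_apply, Fin.sum_univ_three]

theorem euler (M : Mat) (h1 : Mᵀ * M = 1) (h2 : M.det = 1) :
    ∃ a b c, M = Rz a * Rx b * Rz c := by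
  set x := M 0 2 with hxd
  set y := M 1 2 with hyd
  set z := M 2 2 with hzd
  have hnorm : x * x + y * y + z * z = 1 := by
    have h := congrFun (congrFun h1 2) 2
    simpa [Matrix.mul_apply, Fin.sum_univ_three, Matrix.one_apply,
      Matrix.transpose_apply] using h
  set s := Real.sqrt (x^2 + y^2) with hsdef
  have hs2 : s^2 = x^2 + y^2 := Real.sq_sqrt (by positivity)
  have hsnn : 0 ≤ s := Real.sqrt_nonneg _
  obtain ⟨β, hβc, hβs⟩ := exists_angle z s (by nlinarith)
  have hxy0 : s = 0 → x = 0 ∧ y = 0 := by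
    intro h0
    have h : x^2 + y^2 = 0 := by rw [← hs2, h0]; ring
    constructor <;> nlinarith [sq_nonneg x, sq_nonneg y, h]
  have hα : ∃ α, Real.cos α * s = -y ∧ Real.sin α * s = x := by
    by_cases h0 : s = 0
    · obtain ⟨hx0, hy0⟩ := hxy0 h0
      exact ⟨0, by rw [h0, hy0]; ring, by rw [h0, hx0]; ring⟩
    · obtain ⟨α, hc, hsn⟩ := exists_angle (-y/s) (x/s)
        (by field_simp; nlinarith)
      refine ⟨α, ?_, ?_⟩
      · rw [hc]; field_simp
      · rw [hsn]; field_simp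
  obtain ⟨α, hαc, hαs⟩ := hα
  have hxy1 : Real.cos α * x + Real.sin α * y = 0 := by
    by_cases h0 : s = 0
    · obtain ⟨hx0, hy0⟩ := hxy0 h0
      rw [hx0, hy0]; ring
    · have h : s * (Real.cos α * x + Real.sin α * y) = 0 := by
        linear_combination x * hαc + y * hαs
      rcases mul_eq_zero.mp h with h | h
      · exact absurd h h0
      · exact h
  have hxy2 : -(Real.sin α) * x + Real.cos α * y = -s := by
    by_cases h0 : s = 0
    · obtain ⟨hx0, hy0⟩ := hxy0 h0
      rw [hx0, hy0, h0]; ring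
    · have h : s * (-(Real.sin α) * x + Real.cos α * y) = s * (-s) := by
        linear_combination (-x) * hαs + y * hαc + hs2
      exact mul_left_cancel₀ h0 h
  set W := Rz (-α) * M with hW
  have hW0 : W 0 2 = 0 := by
    rw [hW, Rz_mul_e02, Real.cos_neg, Real.sin_neg, ← hxd, ← hyd]
    linarith [hxy1]
  have hW1 : W 1 2 = -s := by
    rw [hW, Rz_mul_e12, Real.cos_neg, Real.sin_neg, ← hxd, ← hyd]
    linarith [hxy2]
  have hW2 : W 2 2 = z := by rw [hW, Rz_mul_e22, ← hzd]
  set N := Rx (-β) * W with hN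
  have hN0 : N 0 2 = 0 := by rw [hN, Rx_mul_e02, hW0]
  have hN1 : N 1 2 = 0 := by
    rw [hN, Rx_mul_e12, Real.cos_neg, Real.sin_neg, hW1, hW2, hβc, hβs]; ring
  have hN2 : N 2 2 = 1 := by
    rw [hN, Rx_mul_e22, Real.cos_neg, Real.sin_neg, hW1, hW2, hβc, hβs]
    nlinarith [hnorm, hs2]
  have hNorth : Nᵀ * N = 1 := by
    rw [hN, hW]
    exact orth_mul (Rx_orth (-β)) (orth_mul (Rz_orth (-α)) h1)
  have hNdet : N.det = 1 := by
    rw [hN, hW, Matrix.det_mul, Matrix.det_mul, Rx_det, Rz_det, h2]; ring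
  obtain ⟨γ, hγ⟩ := eq_Rz_of_fixed N hNorth hNdet hN0 hN1 hN2
  refine ⟨α, β, γ, ?_⟩
  have hrec : Rz α * (Rx β * N) = M := by
    rw [hN, hW, ← Matrix.mul_assoc (Rx β), Rx_mul, add_neg_cancel, Rx_zero,
      Matrix.one_mul, ← Matrix.mul_assoc, Rz_mul, add_neg_cancel, Rz_zero, Matrix.one_mul]
  rw [← hrec, hγ, Matrix.mul_assoc]

end Euler

end

end SO3Free

open Matrix

theorem exists_dense_free_subgroup_SO3 :
    ∃ A B : (Matrix (Fin 3) (Fin 3) ℝ)ˣ,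
      (A : Matrix (Fin 3) (Fin 3) ℝ)ᵀ * (A : Matrix (Fin 3) (Fin 3) ℝ) = 1 ∧
      (A : Matrix (Fin 3) (Fin 3) ℝ).det = 1 ∧
      (B : Matrix (Fin 3) (Fin 3) ℝ)ᵀ * (B : Matrix (Fin 3) (Fin 3) ℝ) = 1 ∧
      (B : Matrix (Fin 3) (Fin 3) ℝ).det = 1 ∧
      Function.Injective
        (FreeGroup.lift (fun b : Bool => if b then A else B) :
          FreeGroup Bool →* (Matrix (Fin 3) (Fin 3) ℝ)ˣ) ∧
      closure ((fun M : (Matrix (Fin 3) (Fin 3) ℝ)ˣ => (M : Matrix (Fin 3) (Fin 3) ℝ)) ''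
          (Subgroup.closure {A, B} : Set (Matrix (Fin 3) (Fin 3) ℝ)ˣ)) =
        {M : Matrix (Fin 3) (Fin 3) ℝ | Mᵀ * M = 1 ∧ M.det = 1} := by
  refine ⟨SO3Free.Au, SO3Free.Bu, SO3Free.Au_mem_SOu.1, SO3Free.Au_mem_SOu.2,
    SO3Free.Bu_mem_SOu.1, SO3Free.Bu_mem_SOu.2, SO3Free.lift_injective, ?_⟩
  apply Set.Subset.antisymm
  · apply closure_minimal
    · rintro _ ⟨u, hu, rfl⟩
      exact ⟨(SO3Free.Gp_le_SOu hu).1, (SO3Free.Gp_le_SOu hu).2⟩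
    · apply IsClosed.inter
      · exact isClosed_eq ((continuous_id.matrix_transpose).matrix_mul continuous_id)
          continuous_const
      · exact isClosed_eq continuous_id.matrix_det continuous_const
  · rintro M ⟨h1, h2⟩
    obtain ⟨a, b, c, rfl⟩ := SO3Free.euler M h1 h2
    have hm : SO3Free.Rz a * SO3Free.Rx b * SO3Free.Rz c ∈ SO3Free.C :=
      SO3Free.C.mul_mem (SO3Free.C.mul_mem (SO3Free.Rz_mem_C a) (SO3Free.Rx_mem_C b))
        (SO3Free.Rz_mem_C c)
    have hG : Subgroup.closure {SO3Free.Au, SO3Free.Bu} = SO3Free.Gp := rfl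
    rw [hG, ← SO3Free.coe_C]
    exact hm
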